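/- arXiv:1904.08046 — 5 statements merged into one kernel-verified Lean document; each statement's English description precedes it below -/
import Mathlib

section
/- Let D ⊆ ℝ² be open and φ : D → ℝ a C^2 function satisfying the minimal surface equation (1 + φ_y²)φ_xx − 2φ_xφ_yφ_xy + (1 + φ_x²)φ_yy = 0, and suppose ψ : D → ℝ is C^2 with ψ_x = −φ_y/√(φ_x²+φ_y²+1) and ψ_y = φ_x/√(φ_x²+φ_y²+1). Then ψ satisfies the zero mean curvature equation (1 − ψ_y²)ψ_xx + 2ψ_xψ_yψ_xy + (1 − ψ_x²)ψ_yy = 0 and moreover 1 − ψ_x² − ψ_y² = 1/(φ_x²+φ_y²+1) > 0, so the graph of ψ is space-like (a maximal surface). -/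
/-- Partial derivative in the first variable of a function on ℝ². -/
noncomputable def pdx (f : ℝ × ℝ → ℝ) (p : ℝ × ℝ) : ℝ := deriv (fun t => f (t, p.2)) p.1
/-- Partial derivative in the second variable of a function on ℝ². -/
noncomputable def pdy (f : ℝ × ℝ → ℝ) (p : ℝ × ℝ) : ℝ := deriv (fun t => f (p.1, t)) p.2

open Filter Topology

private lemma lineX_hasDerivAt (p : ℝ × ℝ) :
    HasDerivAt (fun t : ℝ => ((t, p.2) : ℝ × ℝ)) ((1 : ℝ), (0 : ℝ)) p.1 :=
  HasDerivAt.prodMk (hasDerivAt_id p.1) (hasDerivAt_const p.1 p.2)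

private lemma lineY_hasDerivAt (p : ℝ × ℝ) :
    HasDerivAt (fun t : ℝ => ((p.1, t) : ℝ × ℝ)) ((0 : ℝ), (1 : ℝ)) p.2 :=
  HasDerivAt.prodMk (hasDerivAt_const p.2 p.1) (hasDerivAt_id p.2)

private lemma hasDerivAt_fstline {g : ℝ × ℝ → ℝ} {g' : ℝ × ℝ →L[ℝ] ℝ} {p : ℝ × ℝ}
    (h : HasFDerivAt g g' p) : HasDerivAt (fun t => g (t, p.2)) (g' (1, 0)) p.1 := by
  have h' : HasFDerivAt g g' ((fun t : ℝ => ((t, p.2) : ℝ × ℝ)) p.1) := by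
    simpa using h
  exact h'.comp_hasDerivAt p.1 (lineX_hasDerivAt p)

private lemma hasDerivAt_sndline {g : ℝ × ℝ → ℝ} {g' : ℝ × ℝ →L[ℝ] ℝ} {p : ℝ × ℝ}
    (h : HasFDerivAt g g' p) : HasDerivAt (fun t => g (p.1, t)) (g' (0, 1)) p.2 := by
  have h' : HasFDerivAt g g' ((fun t : ℝ => ((p.1, t) : ℝ × ℝ)) p.2) := by
    simpa using h
  exact h'.comp_hasDerivAt p.2 (lineY_hasDerivAt p)

private lemma evtX {f g : ℝ × ℝ → ℝ} {p : ℝ × ℝ} (h : f =ᶠ[𝓝 p] g) :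
    (fun t => f (t, p.2)) =ᶠ[𝓝 p.1] (fun t => g (t, p.2)) := by
  have ht : Filter.Tendsto (fun t : ℝ => ((t, p.2) : ℝ × ℝ)) (𝓝 p.1) (𝓝 p) := by
    have := (continuous_id.prodMk (continuous_const (y := p.2))).tendsto p.1
    simpa using this
  exact h.comp_tendsto ht

private lemma evtY {f g : ℝ × ℝ → ℝ} {p : ℝ × ℝ} (h : f =ᶠ[𝓝 p] g) :
    (fun t => f (p.1, t)) =ᶠ[𝓝 p.2] (fun t => g (p.1, t)) := by
  have ht : Filter.Tendsto (fun t : ℝ => ((p.1, t) : ℝ × ℝ)) (𝓝 p.2) (𝓝 p) := by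
    have := ((continuous_const (y := p.1)).prodMk continuous_id).tendsto p.2
    simpa using this
  exact h.comp_tendsto ht

private lemma pdx_congr {f g : ℝ × ℝ → ℝ} {p : ℝ × ℝ} (h : f =ᶠ[𝓝 p] g) :
    pdx f p = pdx g p := (evtX h).deriv_eq

private lemma pdy_congr {f g : ℝ × ℝ → ℝ} {p : ℝ × ℝ} (h : f =ᶠ[𝓝 p] g) :
    pdy f p = pdy g p := (evtY h).deriv_eq

theorem stmt_4 (D : Set (ℝ × ℝ)) (hD : IsOpen D) (φ ψ : ℝ × ℝ → ℝ)
    (hφ : ContDiffOn ℝ 2 φ D) (hψ : ContDiffOn ℝ 2 ψ D)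
    (hmin : ∀ p ∈ D,
      (1 + (pdy φ p) ^ 2) * pdx (pdx φ) p
        - 2 * pdx φ p * pdy φ p * pdy (pdx φ) p
        + (1 + (pdx φ p) ^ 2) * pdy (pdy φ) p = 0)
    (hdx : ∀ p ∈ D, pdx ψ p = -(pdy φ p) / Real.sqrt ((pdx φ p) ^ 2 + (pdy φ p) ^ 2 + 1))
    (hdy : ∀ p ∈ D, pdy ψ p = pdx φ p / Real.sqrt ((pdx φ p) ^ 2 + (pdy φ p) ^ 2 + 1)) :
    ∀ p ∈ D,
      ((1 - (pdy ψ p) ^ 2) * pdx (pdx ψ) p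
        + 2 * pdx ψ p * pdy ψ p * pdy (pdx ψ) p
        + (1 - (pdx ψ p) ^ 2) * pdy (pdy ψ) p = 0) ∧
      (1 - (pdx ψ p) ^ 2 - (pdy ψ p) ^ 2 = 1 / ((pdx φ p) ^ 2 + (pdy φ p) ^ 2 + 1)) ∧
      (0 < 1 - (pdx ψ p) ^ 2 - (pdy ψ p) ^ 2) := by
  intro p hp
  have hpD : D ∈ 𝓝 p := hD.mem_nhds hp
  have hC2 : ∀ q ∈ D, ContDiffAt ℝ 2 φ q := fun q hq => hφ.contDiffAt (hD.mem_nhds hq)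
  have hdiff : ∀ q ∈ D, DifferentiableAt ℝ φ q := fun q hq =>
    (hC2 q hq).differentiableAt (by norm_num)
  set u : ℝ × ℝ → ℝ := fun q => fderiv ℝ φ q (1, 0) with hu_def
  set v : ℝ × ℝ → ℝ := fun q => fderiv ℝ φ q (0, 1) with hv_def
  have hpdxφ : ∀ q ∈ D, pdx φ q = u q := fun q hq =>
    (hasDerivAt_fstline (hdiff q hq).hasFDerivAt).deriv
  have hpdyφ : ∀ q ∈ D, pdy φ q = v q := fun q hq =>
    (hasDerivAt_sndline (hdiff q hq).hasFDerivAt).deriv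
  -- the second derivative of φ at p
  have hf'c : ContDiffAt ℝ 1 (fderiv ℝ φ) p := (hC2 p hp).fderiv_right (le_refl 2)
  have hf'' : HasFDerivAt (fderiv ℝ φ) (fderiv ℝ (fderiv ℝ φ) p) p :=
    (hf'c.differentiableAt one_ne_zero).hasFDerivAt
  set f'' := fderiv ℝ (fderiv ℝ φ) p with hf''_def
  have hEvd : ∀ᶠ q in 𝓝 p, HasFDerivAt φ (fderiv ℝ φ q) q := by
    filter_upwards [hpD] with q hq using (hdiff q hq).hasFDerivAt
  have hsymm : f'' (1, 0) (0, 1) = f'' (0, 1) (1, 0) :=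
    second_derivative_symmetric_of_eventually_of_real hEvd hf'' (1, 0) (0, 1)
  set a := f'' (1, 0) (1, 0) with ha_def
  set b := f'' (0, 1) (1, 0) with hb_def
  set d := f'' (0, 1) (0, 1) with hd_def
  -- derivatives of u and v at p
  have hu' : HasFDerivAt u ((fderiv ℝ φ p).comp (0 : ℝ × ℝ →L[ℝ] ℝ × ℝ)
      + f''.flip ((1, 0) : ℝ × ℝ)) p := hf''.clm_apply (hasFDerivAt_const _ p)
  have hv' : HasFDerivAt v ((fderiv ℝ φ p).comp (0 : ℝ × ℝ →L[ℝ] ℝ × ℝ)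
      + f''.flip ((0, 1) : ℝ × ℝ)) p := hf''.clm_apply (hasFDerivAt_const _ p)
  have hux : HasDerivAt (fun t => u (t, p.2)) a p.1 := by
    simpa using hasDerivAt_fstline hu'
  have huy : HasDerivAt (fun t => u (p.1, t)) b p.2 := by
    simpa using hasDerivAt_sndline hu'
  have hvx : HasDerivAt (fun t => v (t, p.2)) b p.1 := by
    simpa [hsymm] using hasDerivAt_fstline hv'
  have hvy : HasDerivAt (fun t => v (p.1, t)) d p.2 := by
    simpa using hasDerivAt_sndline hv'
  -- basic quantities
  set U := u p with hU_def
  set V := v p with hV_def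
  set S := U ^ 2 + V ^ 2 + 1 with hS_def
  have hS_pos : 0 < S := by positivity
  set Wp := Real.sqrt S with hWp_def
  have hWp_pos : 0 < Wp := Real.sqrt_pos.mpr hS_pos
  have hWp_ne : Wp ≠ 0 := ne_of_gt hWp_pos
  have hWsq : Wp ^ 2 = S := Real.sq_sqrt hS_pos.le
  set Wf : ℝ × ℝ → ℝ := fun q => Real.sqrt (u q ^ 2 + v q ^ 2 + 1) with hWf_def
  -- derivatives of Wf along the two lines
  have hSx : HasDerivAt (fun t => u (t, p.2) ^ 2 + v (t, p.2) ^ 2 + 1)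
      (2 * U * a + 2 * V * b) p.1 := by
    have := ((hux.pow 2).add (hvx.pow 2)).add_const 1
    simpa [hU_def, hV_def, mul_comm, mul_assoc, mul_left_comm] using this
  have hSy : HasDerivAt (fun t => u (p.1, t) ^ 2 + v (p.1, t) ^ 2 + 1)
      (2 * U * b + 2 * V * d) p.2 := by
    have := ((huy.pow 2).add (hvy.pow 2)).add_const 1
    simpa [hU_def, hV_def, mul_comm, mul_assoc, mul_left_comm] using this
  have hSp : u (p.1, p.2) ^ 2 + v (p.1, p.2) ^ 2 + 1 = S := by
    simp [hS_def, hU_def, hV_def]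
  have hWx : HasDerivAt (fun t => Wf (t, p.2)) ((U * a + V * b) / Wp) p.1 := by
    have h := (Real.hasDerivAt_sqrt (x := S) (ne_of_gt hS_pos)).comp (h := fun t => u (t, p.2) ^ 2 + v (t, p.2) ^ 2 + 1) p.1 (by
      simpa [hSp] using hSx)
    have h2 : HasDerivAt (fun t => Real.sqrt (u (t, p.2) ^ 2 + v (t, p.2) ^ 2 + 1))
        (1 / (2 * Real.sqrt S) * (2 * U * a + 2 * V * b)) p.1 := by
      simpa [Function.comp_def] using h
    convert h2 using 1
    rw [hWp_def]; field_simp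
  have hWy : HasDerivAt (fun t => Wf (p.1, t)) ((U * b + V * d) / Wp) p.2 := by
    have h := (Real.hasDerivAt_sqrt (x := S) (ne_of_gt hS_pos)).comp (h := fun t => u (p.1, t) ^ 2 + v (p.1, t) ^ 2 + 1) p.2 (by
      simpa [hSp] using hSy)
    have h2 : HasDerivAt (fun t => Real.sqrt (u (p.1, t) ^ 2 + v (p.1, t) ^ 2 + 1))
        (1 / (2 * Real.sqrt S) * (2 * U * b + 2 * V * d)) p.2 := by
      simpa [Function.comp_def] using h
    convert h2 using 1
    rw [hWp_def]; field_simp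
  have hWfp : Wf (p.1, p.2) = Wp := by simp [hWf_def, hWp_def, hS_def, hU_def, hV_def]
  have hWfp_ne : Wf (p.1, p.2) ≠ 0 := by rw [hWfp]; exact hWp_ne
  -- first derivatives of ψ expressed via u, v, Wf
  have hEx : pdx ψ =ᶠ[𝓝 p] fun q => -(v q) / Wf q := by
    filter_upwards [hpD] with q hq
    rw [hdx q hq, hpdxφ q hq, hpdyφ q hq]
  have hEy : pdy ψ =ᶠ[𝓝 p] fun q => u q / Wf q := by
    filter_upwards [hpD] with q hq
    rw [hdy q hq, hpdxφ q hq, hpdyφ q hq]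
  have hψx : pdx ψ p = -V / Wp := by
    rw [hdx p hp, hpdxφ p hp, hpdyφ p hp]
  have hψy : pdy ψ p = U / Wp := by
    rw [hdy p hp, hpdxφ p hp, hpdyφ p hp]
  -- second derivatives of ψ
  have hψxx : pdx (pdx ψ) p
      = (-b * Wp - -V * ((U * a + V * b) / Wp)) / Wp ^ 2 := by
    rw [pdx_congr hEx]
    have h := ((hvx.neg).div hWx hWfp_ne).deriv
    rw [hWfp] at h
    show deriv (fun t => -v (t, p.2) / Wf (t, p.2)) p.1 = _
    exact h
  have hψxy : pdy (pdx ψ) p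
      = (-d * Wp - -V * ((U * b + V * d) / Wp)) / Wp ^ 2 := by
    rw [pdy_congr hEx]
    have h := ((hvy.neg).div hWy hWfp_ne).deriv
    rw [hWfp] at h
    show deriv (fun t => -v (p.1, t) / Wf (p.1, t)) p.2 = _
    exact h
  have hψyy : pdy (pdy ψ) p
      = (b * Wp - U * ((U * b + V * d) / Wp)) / Wp ^ 2 := by
    rw [pdy_congr hEy]
    have h := (huy.div hWy hWfp_ne).deriv
    rw [hWfp] at h
    show deriv (fun t => u (p.1, t) / Wf (p.1, t)) p.2 = _
    exact h
  -- rewrite hmin in terms of a, b, d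
  have hExφ : pdx φ =ᶠ[𝓝 p] u := by filter_upwards [hpD] with q hq using hpdxφ q hq
  have hEyφ : pdy φ =ᶠ[𝓝 p] v := by filter_upwards [hpD] with q hq using hpdyφ q hq
  have hφxx : pdx (pdx φ) p = a := by
    rw [pdx_congr hExφ]; exact hux.deriv
  have hφxy : pdy (pdx φ) p = b := by
    rw [pdy_congr hExφ]; exact huy.deriv
  have hφyy : pdy (pdy φ) p = d := by
    rw [pdy_congr hEyφ]; exact hvy.deriv
  have hM := hmin p hp
  rw [hφxx, hφxy, hφyy, hpdxφ p hp, hpdyφ p hp, ← hU_def, ← hV_def] at hM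
  -- conclude
  rw [hψx, hψy, hψxx, hψxy, hψyy, hpdxφ p hp, hpdyφ p hp, ← hU_def, ← hV_def, ← hS_def]
  have hWsq' : Wp ^ 2 = U ^ 2 + V ^ 2 + 1 := by rw [hWsq, hS_def]
  clear_value a b d U V S Wp
  refine ⟨?_, ?_, ?_⟩
  · have hN : (Wp ^ 2 - U ^ 2) * (-b * Wp ^ 2 + V * (U * a + V * b))
        + 2 * (-V) * U * (-d * Wp ^ 2 + V * (U * b + V * d))
        + (Wp ^ 2 - V ^ 2) * (b * Wp ^ 2 - U * (U * b + V * d)) = 0 := by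
      rw [hWsq']
      linear_combination (U * V) * hM
    have hrepr : (1 - (U / Wp) ^ 2) * ((-b * Wp - -V * ((U * a + V * b) / Wp)) / Wp ^ 2)
        + 2 * (-V / Wp) * (U / Wp) * ((-d * Wp - -V * ((U * b + V * d) / Wp)) / Wp ^ 2)
        + (1 - (-V / Wp) ^ 2) * ((b * Wp - U * ((U * b + V * d) / Wp)) / Wp ^ 2)
        = ((Wp ^ 2 - U ^ 2) * (-b * Wp ^ 2 + V * (U * a + V * b))
        + 2 * (-V) * U * (-d * Wp ^ 2 + V * (U * b + V * d))
        + (Wp ^ 2 - V ^ 2) * (b * Wp ^ 2 - U * (U * b + V * d))) / Wp ^ 5 := by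
      field_simp
      ring
    rw [hrepr, hN, zero_div]
  · rw [div_pow, div_pow, hWsq]
    rw [hS_def]
    field_simp
    ring
  · have h2 : 1 - (-V / Wp) ^ 2 - (U / Wp) ^ 2 = 1 / S := by
      rw [div_pow, div_pow, hWsq, hS_def]
      field_simp
      ring
    rw [h2]
    exact div_pos one_pos hS_pos
end

section
/- Let D ⊆ ℝ² be open and φ : D → ℝ a C^2 function satisfying the time-like ZMC equation (1 − φ_y²)φ_xx + 2φ_xφ_yφ_xy + (1 − φ_x²)φ_yy = 0 with φ_x² + φ_y² > 1 on D, and suppose ψ : D → ℝ is C^2 with ψ_x = −φ_y/√(φ_x²+φ_y²−1) and ψ_y = φ_x/√(φ_x²+φ_y²−1). Then ψ also satisfies the ZMC equation (1 − ψ_y²)ψ_xx + 2ψ_xψ_yψ_xy + (1 − ψ_x²)ψ_yy = 0 and 1 − ψ_x² − ψ_y² = −1/(φ_x²+φ_y²−1) < 0, so the graph of ψ is time-like. -/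
open Topology Filter


lemma hasDerivAt_slice_x {f : ℝ × ℝ → ℝ} {p : ℝ × ℝ} (hf : DifferentiableAt ℝ f p) :
    HasDerivAt (fun t => f (t, p.2)) (fderiv ℝ f p (1, 0)) p.1 := by
  have h : HasDerivAt (fun t : ℝ => (t, p.2)) ((1 : ℝ), (0 : ℝ)) p.1 :=
    (hasDerivAt_id p.1).prodMk (hasDerivAt_const p.1 p.2)
  exact hf.hasFDerivAt.comp_hasDerivAt p.1 h

lemma hasDerivAt_slice_y {f : ℝ × ℝ → ℝ} {p : ℝ × ℝ} (hf : DifferentiableAt ℝ f p) :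
    HasDerivAt (fun t => f (p.1, t)) (fderiv ℝ f p (0, 1)) p.2 := by
  have h : HasDerivAt (fun t : ℝ => (p.1, t)) ((0 : ℝ), (1 : ℝ)) p.2 :=
    (hasDerivAt_const p.2 p.1).prodMk (hasDerivAt_id p.2)
  exact hf.hasFDerivAt.comp_hasDerivAt p.2 h

lemma pdx_eq_fderiv {f : ℝ × ℝ → ℝ} {p : ℝ × ℝ} (hf : DifferentiableAt ℝ f p) :
    pdx f p = fderiv ℝ f p (1, 0) := (hasDerivAt_slice_x hf).deriv

lemma pdy_eq_fderiv {f : ℝ × ℝ → ℝ} {p : ℝ × ℝ} (hf : DifferentiableAt ℝ f p) :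
    pdy f p = fderiv ℝ f p (0, 1) := (hasDerivAt_slice_y hf).deriv

theorem stmt_5 (D : Set (ℝ × ℝ)) (hD : IsOpen D) (φ ψ : ℝ × ℝ → ℝ)
    (hφ : ContDiffOn ℝ 2 φ D) (hψ : ContDiffOn ℝ 2 ψ D)
    (htl : ∀ p ∈ D, 1 < (pdx φ p) ^ 2 + (pdy φ p) ^ 2)
    (hzmc : ∀ p ∈ D,
      (1 - (pdy φ p) ^ 2) * pdx (pdx φ) p
        + 2 * pdx φ p * pdy φ p * pdy (pdx φ) p
        + (1 - (pdx φ p) ^ 2) * pdy (pdy φ) p = 0)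
    (hdx : ∀ p ∈ D, pdx ψ p = -(pdy φ p) / Real.sqrt ((pdx φ p) ^ 2 + (pdy φ p) ^ 2 - 1))
    (hdy : ∀ p ∈ D, pdy ψ p = pdx φ p / Real.sqrt ((pdx φ p) ^ 2 + (pdy φ p) ^ 2 - 1)) :
    ∀ p ∈ D,
      ((1 - (pdy ψ p) ^ 2) * pdx (pdx ψ) p
        + 2 * pdx ψ p * pdy ψ p * pdy (pdx ψ) p
        + (1 - (pdx ψ p) ^ 2) * pdy (pdy ψ) p = 0) ∧
      (1 - (pdx ψ p) ^ 2 - (pdy ψ p) ^ 2 = -(1 / ((pdx φ p) ^ 2 + (pdy φ p) ^ 2 - 1))) ∧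
      (1 - (pdx ψ p) ^ 2 - (pdy ψ p) ^ 2 < 0) := by
  intro p hp
  set g := fderiv ℝ φ with hg_def
  have hg : ContDiffOn ℝ 1 g D := hφ.fderiv_of_isOpen hD le_rfl
  set a : ℝ × ℝ → ℝ := fun q => g q (1, 0) with ha_def
  set b : ℝ × ℝ → ℝ := fun q => g q (0, 1) with hb_def
  have hφdiff : ∀ q ∈ D, DifferentiableAt ℝ φ q := fun q hq =>
    (hφ.differentiableOn (by norm_num) q hq).differentiableAt (hD.mem_nhds hq)
  have hpdxφ : ∀ q ∈ D, pdx φ q = a q := fun q hq => pdx_eq_fderiv (hφdiff q hq)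
  have hpdyφ : ∀ q ∈ D, pdy φ q = b q := fun q hq => pdy_eq_fderiv (hφdiff q hq)
  have hadiff : DifferentiableAt ℝ a p :=
    ((hg.clm_apply contDiffOn_const).differentiableOn one_ne_zero p hp).differentiableAt
      (hD.mem_nhds hp)
  have hbdiff : DifferentiableAt ℝ b p :=
    ((hg.clm_apply contDiffOn_const).differentiableOn one_ne_zero p hp).differentiableAt
      (hD.mem_nhds hp)
  have hgdiff : DifferentiableAt ℝ g p :=
    (hg.differentiableOn one_ne_zero p hp).differentiableAt (hD.mem_nhds hp)
  -- Abbreviations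
  set a0 : ℝ := a p with ha0
  set b0 : ℝ := b p with hb0
  set A : ℝ := fderiv ℝ a p (1, 0) with hA
  set B : ℝ := fderiv ℝ a p (0, 1) with hB
  set B' : ℝ := fderiv ℝ b p (1, 0) with hB'
  set C : ℝ := fderiv ℝ b p (0, 1) with hC
  -- symmetry of second derivatives
  have hfa : HasFDerivAt a ((fderiv ℝ g p).flip ((1 : ℝ), (0 : ℝ))) p := by
    simpa using hgdiff.hasFDerivAt.clm_apply (hasFDerivAt_const ((1 : ℝ), (0 : ℝ)) p)
  have hfb : HasFDerivAt b ((fderiv ℝ g p).flip ((0 : ℝ), (1 : ℝ))) p := by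
    simpa using hgdiff.hasFDerivAt.clm_apply (hasFDerivAt_const ((0 : ℝ), (1 : ℝ)) p)
  have hsym : IsSymmSndFDerivAt ℝ φ p :=
    (hφ.contDiffAt (hD.mem_nhds hp)).isSymmSndFDerivAt (by simp)
  have hBB' : B = B' := by
    rw [hB, hB', hfa.fderiv, hfb.fderiv]
    exact hsym (0, 1) (1, 0)
  -- pointwise values
  have ha0' : pdx φ p = a0 := hpdxφ p hp
  have hb0' : pdy φ p = b0 := hpdyφ p hp
  have hS0 : (0 : ℝ) < a0 ^ 2 + b0 ^ 2 - 1 := by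
    have := htl p hp
    rw [ha0', hb0'] at this
    linarith
  set w : ℝ := Real.sqrt (a0 ^ 2 + b0 ^ 2 - 1) with hw_def
  have hw : 0 < w := Real.sqrt_pos.2 hS0
  have hw2 : w ^ 2 = a0 ^ 2 + b0 ^ 2 - 1 := Real.sq_sqrt hS0.le
  -- ψ first partials
  have hψx : pdx ψ p = -b0 / w := by rw [hdx p hp, ha0', hb0']
  have hψy : pdy ψ p = a0 / w := by rw [hdy p hp, ha0', hb0']
  -- neighborhood facts
  have hevx : ∀ᶠ t in 𝓝 p.1, (t, p.2) ∈ D :=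
    (continuous_id.prodMk continuous_const).continuousAt.preimage_mem_nhds (hD.mem_nhds hp)
  have hevy : ∀ᶠ t in 𝓝 p.2, (p.1, t) ∈ D :=
    (continuous_const.prodMk continuous_id).continuousAt.preimage_mem_nhds (hD.mem_nhds hp)
  -- second partials of φ in terms of a, b
  have hpdxx : pdx (pdx φ) p = A := by
    have he : (fun t => pdx φ (t, p.2)) =ᶠ[𝓝 p.1] fun t => a (t, p.2) :=
      hevx.mono fun t ht => hpdxφ _ ht
    rw [pdx, he.deriv_eq]
    exact (hasDerivAt_slice_x hadiff).deriv
  have hpdxy : pdy (pdx φ) p = B := by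
    have he : (fun t => pdx φ (p.1, t)) =ᶠ[𝓝 p.2] fun t => a (p.1, t) :=
      hevy.mono fun t ht => hpdxφ _ ht
    rw [pdy, he.deriv_eq]
    exact (hasDerivAt_slice_y hadiff).deriv
  have hpdyy : pdy (pdy φ) p = C := by
    have he : (fun t => pdy φ (p.1, t)) =ᶠ[𝓝 p.2] fun t => b (p.1, t) :=
      hevy.mono fun t ht => hpdyφ _ ht
    rw [pdy, he.deriv_eq]
    exact (hasDerivAt_slice_y hbdiff).deriv
  -- rewrite ZMC hypothesis
  have hzmc' : (1 - b0 ^ 2) * A + 2 * a0 * b0 * B + (1 - a0 ^ 2) * C = 0 := by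
    have := hzmc p hp
    rwa [ha0', hb0', hpdxx, hpdxy, hpdyy] at this
  -- slice derivatives of a and b
  have hatx : HasDerivAt (fun t => a (t, p.2)) A p.1 := hasDerivAt_slice_x hadiff
  have hbtx : HasDerivAt (fun t => b (t, p.2)) B' p.1 := hasDerivAt_slice_x hbdiff
  have haty : HasDerivAt (fun t => a (p.1, t)) B p.2 := hasDerivAt_slice_y hadiff
  have hbty : HasDerivAt (fun t => b (p.1, t)) C p.2 := hasDerivAt_slice_y hbdiff
  -- eventual formulas for pdx ψ, pdy ψ
  have hfx : ∀ q ∈ D, pdx ψ q = -(b q) / Real.sqrt ((a q) ^ 2 + (b q) ^ 2 - 1) := by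
    intro q hq; rw [hdx q hq, hpdxφ q hq, hpdyφ q hq]
  have hfy : ∀ q ∈ D, pdy ψ q = a q / Real.sqrt ((a q) ^ 2 + (b q) ^ 2 - 1) := by
    intro q hq; rw [hdy q hq, hpdxφ q hq, hpdyφ q hq]
  have hSne : a0 ^ 2 + b0 ^ 2 - 1 ≠ 0 := hS0.ne'
  have hwne : w ≠ 0 := hw.ne'
  -- ψxx
  have hψxx : pdx (pdx ψ) p = (a0 * b0 * A + (1 - a0 ^ 2) * B') / w ^ 3 := by
    have he : (fun t => pdx ψ (t, p.2)) =ᶠ[𝓝 p.1]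
        fun t => -(b (t, p.2)) / Real.sqrt ((a (t, p.2)) ^ 2 + (b (t, p.2)) ^ 2 - 1) :=
      hevx.mono fun t ht => hfx _ ht
    have hS : HasDerivAt (fun t => (a (t, p.2)) ^ 2 + (b (t, p.2)) ^ 2 - 1)
        (2 * a0 * A + 2 * b0 * B') p.1 := by
      simpa [mul_comm, mul_assoc, mul_left_comm] using
        ((hatx.pow 2).add (hbtx.pow 2)).sub_const 1
    have hsq := hS.sqrt (by simpa using hSne)
    have hd := (hbtx.fun_neg).fun_div hsq (by simpa [← hw_def] using hwne)
    rw [pdx, he.deriv_eq, hd.deriv]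
    rw [show Real.sqrt (a (p.1, p.2) ^ 2 + b (p.1, p.2) ^ 2 - 1) = w by rw [hw_def]]
    field_simp
    rw [← hb0]
    linear_combination (-B') * hw2
  -- ψxy
  have hψxy : pdy (pdx ψ) p = (a0 * b0 * B + (1 - a0 ^ 2) * C) / w ^ 3 := by
    have he : (fun t => pdx ψ (p.1, t)) =ᶠ[𝓝 p.2]
        fun t => -(b (p.1, t)) / Real.sqrt ((a (p.1, t)) ^ 2 + (b (p.1, t)) ^ 2 - 1) :=
      hevy.mono fun t ht => hfx _ ht
    have hS : HasDerivAt (fun t => (a (p.1, t)) ^ 2 + (b (p.1, t)) ^ 2 - 1)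
        (2 * a0 * B + 2 * b0 * C) p.2 := by
      simpa [mul_comm, mul_assoc, mul_left_comm] using
        ((haty.pow 2).add (hbty.pow 2)).sub_const 1
    have hsq := hS.sqrt (by simpa using hSne)
    have hd := (hbty.fun_neg).fun_div hsq (by simpa [← hw_def] using hwne)
    rw [pdy, he.deriv_eq, hd.deriv]
    rw [show Real.sqrt (a (p.1, p.2) ^ 2 + b (p.1, p.2) ^ 2 - 1) = w by rw [hw_def]]
    field_simp
    rw [← hb0]
    linear_combination (-C) * hw2
  -- ψyy
  have hψyy : pdy (pdy ψ) p = ((b0 ^ 2 - 1) * B - a0 * b0 * C) / w ^ 3 := by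
    have he : (fun t => pdy ψ (p.1, t)) =ᶠ[𝓝 p.2]
        fun t => a (p.1, t) / Real.sqrt ((a (p.1, t)) ^ 2 + (b (p.1, t)) ^ 2 - 1) :=
      hevy.mono fun t ht => hfy _ ht
    have hS : HasDerivAt (fun t => (a (p.1, t)) ^ 2 + (b (p.1, t)) ^ 2 - 1)
        (2 * a0 * B + 2 * b0 * C) p.2 := by
      simpa [mul_comm, mul_assoc, mul_left_comm] using
        ((haty.pow 2).add (hbty.pow 2)).sub_const 1
    have hsq := hS.sqrt (by simpa using hSne)
    have hd := haty.fun_div hsq (by simpa [← hw_def] using hwne)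
    rw [pdy, he.deriv_eq, hd.deriv]
    rw [show Real.sqrt (a (p.1, p.2) ^ 2 + b (p.1, p.2) ^ 2 - 1) = w by rw [hw_def]]
    field_simp
    rw [← ha0]
    linear_combination B * hw2
  have h2 : 1 - (pdx ψ p) ^ 2 - (pdy ψ p) ^ 2
      = -(1 / ((pdx φ p) ^ 2 + (pdy φ p) ^ 2 - 1)) := by
    rw [hψx, hψy, ha0', hb0', ← hw2]
    field_simp
    linear_combination hw2
  refine ⟨?_, h2, ?_⟩
  · rw [hψx, hψy, hψxx, hψxy, hψyy, ← hBB']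
    field_simp
    linear_combination (-(a0 * b0)) * hzmc'
      + ((a0 * b0 * A + (1 - a0 ^ 2) * B + (B * (b0 ^ 2 - 1) - a0 * b0 * C))) * hw2
  · rw [h2]
    have : 0 < 1 / ((pdx φ p) ^ 2 + (pdy φ p) ^ 2 - 1) := by
      rw [ha0', hb0']
      positivity
    linarith
end

section
/- The function φ(x,y) := y + log(tan x), defined on the strip D = {(x,y) : 0 < x < π/2}, satisfies the time-like ZMC equation (1 − φ_y²)φ_xx + 2φ_xφ_yφ_xy + (1 − φ_x²)φ_yy = 0 on D, and satisfies 1 − φ_x² − φ_y² < 0 everywhere on D (all points are time-like). -/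
theorem stmt_6 :
    let φ : ℝ × ℝ → ℝ := fun p => p.2 + Real.log (Real.tan p.1)
    let D : Set (ℝ × ℝ) := {p | 0 < p.1 ∧ p.1 < Real.pi / 2}
    ∀ p ∈ D,
      ((1 - (pdy φ p) ^ 2) * pdx (pdx φ) p
        + 2 * pdx φ p * pdy φ p * pdy (pdx φ) p
        + (1 - (pdx φ p) ^ 2) * pdy (pdy φ) p = 0) ∧
      (1 - (pdx φ p) ^ 2 - (pdy φ p) ^ 2 < 0) := by
  intro φ D p hp
  obtain ⟨h1, h2⟩ := hp
  have htan : 0 < Real.tan p.1 := Real.tan_pos_of_pos_of_lt_pi_div_two h1 h2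
  have hcos : Real.cos p.1 ≠ 0 := by
    have : 0 < Real.cos p.1 := Real.cos_pos_of_mem_Ioo
      ⟨by linarith [Real.pi_pos], h2⟩
    linarith
  have hder : HasDerivAt (fun t => Real.log (Real.tan t))
      ((1 / Real.cos p.1 ^ 2) / Real.tan p.1) p.1 :=
    (Real.hasDerivAt_tan hcos).log (ne_of_gt htan)
  set g : ℝ := (1 / Real.cos p.1 ^ 2) / Real.tan p.1 with hg
  have hgpos : 0 < g := by
    apply div_pos _ htan
    positivity
  -- φ_x = g
  have hx : pdx φ p = g := by
    have : HasDerivAt (fun t => φ (t, p.2)) g p.1 := by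
      simpa [φ] using hder.const_add p.2
    simpa [pdx] using this.deriv
  -- φ_y = 1
  have hy : pdy φ p = 1 := by
    have : HasDerivAt (fun t => φ (p.1, t)) 1 p.2 := by
      simpa [φ] using (hasDerivAt_id p.2).add_const (Real.log (Real.tan p.1))
    simpa [pdy] using this.deriv
  -- ∂y of φ_x is 0, since φ_x(x,·) is constant
  have hyx : pdy (pdx φ) p = 0 := by
    have hconst : (fun t => pdx φ (p.1, t)) =
        fun _ => deriv (fun s => Real.log (Real.tan s)) p.1 := by
      funext t
      simp [pdx, φ, deriv_const_add]
    simp [pdy, hconst]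
  -- ∂y of φ_y is 0, since φ_y(x,·) ≡ 1
  have hyy : pdy (pdy φ) p = 0 := by
    have hconst : (fun t => pdy φ (p.1, t)) = fun _ => (1 : ℝ) := by
      funext t
      have : HasDerivAt (fun s => φ (p.1, s)) 1 t := by
        simpa [φ] using (hasDerivAt_id t).add_const (Real.log (Real.tan p.1))
      simpa [pdy] using this.deriv
    show deriv (fun t => pdy φ (p.1, t)) p.2 = 0
    rw [hconst]; simp
  refine ⟨?_, ?_⟩
  · rw [hx, hy, hyx, hyy]; ring
  · rw [hx, hy]; nlinarith
end

section
/- Let a > 0 and let Ψ(x,y,t) := a·sinh(at)·((x−t)² + y²) + 2(x−t)·cosh(at). Then the gradient (Ψ_x, Ψ_y, Ψ_t) never vanishes at any point (x,y,t) ∈ ℝ³ with Ψ(x,y,t) = 0; consequently the zero set {Ψ = 0} is a C^∞ embedded surface in ℝ³. -/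
/-- Partial derivatives of a function on ℝ³ = ℝ × ℝ × ℝ. -/
noncomputable def pd1 (f : ℝ × ℝ × ℝ → ℝ) (p : ℝ × ℝ × ℝ) : ℝ :=
  deriv (fun s => f (s, p.2.1, p.2.2)) p.1
noncomputable def pd2 (f : ℝ × ℝ × ℝ → ℝ) (p : ℝ × ℝ × ℝ) : ℝ :=
  deriv (fun s => f (p.1, s, p.2.2)) p.2.1
noncomputable def pd3 (f : ℝ × ℝ × ℝ → ℝ) (p : ℝ × ℝ × ℝ) : ℝ :=
  deriv (fun s => f (p.1, p.2.1, s)) p.2.2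

theorem stmt_15 (a : ℝ) (ha : 0 < a) :
    let Ψ : ℝ × ℝ × ℝ → ℝ := fun p =>
      a * Real.sinh (a * p.2.2) * ((p.1 - p.2.2) ^ 2 + p.2.1 ^ 2)
        + 2 * (p.1 - p.2.2) * Real.cosh (a * p.2.2)
    ∀ p : ℝ × ℝ × ℝ, Ψ p = 0 → (pd1 Ψ p, pd2 Ψ p, pd3 Ψ p) ≠ 0 := by
  intro Ψ p hΨ hgrad
  obtain ⟨x, y, t⟩ := p
  simp only [Ψ] at hΨ
  have hc : 0 < Real.cosh (a * t) := Real.cosh_pos (a * t)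
  set S : ℝ := Real.sinh (a * t) with hS
  set C : ℝ := Real.cosh (a * t) with hC
  -- compute pd1
  have h1 : pd1 Ψ (x, y, t) = a * S * (2 * (x - t)) + 2 * C := by
    have hd : HasDerivAt (fun s : ℝ => a * S * ((s - t) ^ 2 + y ^ 2) + 2 * (s - t) * C)
        (a * S * (2 * (x - t)) + 2 * C) x := by
      have hs : HasDerivAt (fun s : ℝ => (s - t) ^ 2 + y ^ 2) (2 * (x - t)) x := by
        have := (((hasDerivAt_id x).sub_const t).pow 2).add_const (y ^ 2)
        simpa using this
      have h2 : HasDerivAt (fun s : ℝ => 2 * (s - t) * C) (2 * C) x := by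
        have := (((hasDerivAt_id x).sub_const t).const_mul 2).mul_const C
        simpa using this
      exact (hs.const_mul (a * S)).add h2
    simpa [pd1, Ψ] using hd.deriv
  -- compute pd2
  have h2 : pd2 Ψ (x, y, t) = a * S * (2 * y) := by
    have hd : HasDerivAt (fun s : ℝ => a * S * ((x - t) ^ 2 + s ^ 2) + 2 * (x - t) * C)
        (a * S * (2 * y)) y := by
      have hs : HasDerivAt (fun s : ℝ => (x - t) ^ 2 + s ^ 2) (2 * y) y := by
        have := ((hasDerivAt_id y).pow 2).const_add ((x - t) ^ 2)
        simpa [mul_comm] using this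
      simpa using (hs.const_mul (a * S)).add_const (2 * (x - t) * C)
    simp only [pd2, Ψ]; exact hd.deriv
  have hg1 : a * S * (2 * (x - t)) + 2 * C = 0 := by
    have := congrArg Prod.fst hgrad; simpa [h1] using this
  have hg2 : a * S * (2 * y) = 0 := by
    have := congrArg (fun q : ℝ × ℝ × ℝ => q.2.1) hgrad; simpa [h2] using this
  -- case on S*y = 0
  rcases mul_eq_zero.mp (by nlinarith : S * y = 0) with hs0 | hy0
  · rw [hs0] at hg1; nlinarith
  · rw [hy0] at hΨ
    have h3 : 2 * C * (x - t) = 0 := by linear_combination 2 * hΨ - (x - t) * hg1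
    have hxt : x - t = 0 := by
      rcases mul_eq_zero.mp h3 with h | h
      · exact absurd h (by positivity)
      · exact h
    rw [hxt] at hg1
    nlinarith
end

section
/- Let ψ be C^2 on an open set D ⊆ ℝ² with B_ψ := 1 − ψ_x² − ψ_y² > 0, and let ρ := √(B_ψ). Suppose ψ satisfies the ZMC equation (1 − ψ_y²)ψ_xx + 2ψ_xψ_yψ_xy + (1 − ψ_x²)ψ_yy = 0. Then the 1-form η := (ψ_y/ρ) dx − (ψ_x/ρ) dy is closed on D, i.e. ∂_y(ψ_y/ρ) + ∂_x(ψ_x/ρ) = 0. -/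
lemma hasDerivAt_horiz (f : ℝ × ℝ → ℝ) (p : ℝ × ℝ) (h : DifferentiableAt ℝ f p) :
    HasDerivAt (fun t => f (t, p.2)) (fderiv ℝ f p (1, 0)) p.1 := by
  have hl : HasDerivAt (fun t : ℝ => (t, p.2)) ((1 : ℝ), (0 : ℝ)) p.1 :=
    (hasDerivAt_id p.1).prodMk (hasDerivAt_const p.1 p.2)
  exact h.hasFDerivAt.comp_hasDerivAt p.1 hl

lemma hasDerivAt_vert (f : ℝ × ℝ → ℝ) (p : ℝ × ℝ) (h : DifferentiableAt ℝ f p) :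
    HasDerivAt (fun t => f (p.1, t)) (fderiv ℝ f p (0, 1)) p.2 := by
  have hl : HasDerivAt (fun t : ℝ => (p.1, t)) ((0 : ℝ), (1 : ℝ)) p.2 :=
    (hasDerivAt_const p.2 p.1).prodMk (hasDerivAt_id p.2)
  exact h.hasFDerivAt.comp_hasDerivAt p.2 hl

lemma pdx_eq (f : ℝ × ℝ → ℝ) (p : ℝ × ℝ) (h : DifferentiableAt ℝ f p) :
    pdx f p = fderiv ℝ f p (1, 0) := (hasDerivAt_horiz f p h).deriv

lemma pdy_eq (f : ℝ × ℝ → ℝ) (p : ℝ × ℝ) (h : DifferentiableAt ℝ f p) :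
    pdy f p = fderiv ℝ f p (0, 1) := (hasDerivAt_vert f p h).deriv

set_option maxHeartbeats 1000000 in
theorem stmt_18 (D : Set (ℝ × ℝ)) (hD : IsOpen D) (ψ : ℝ × ℝ → ℝ)
    (hψ : ContDiffOn ℝ 2 ψ D)
    (hB : ∀ p ∈ D, 0 < 1 - (pdx ψ p) ^ 2 - (pdy ψ p) ^ 2)
    (hzmc : ∀ p ∈ D,
      (1 - (pdy ψ p) ^ 2) * pdx (pdx ψ) p
        + 2 * pdx ψ p * pdy ψ p * pdy (pdx ψ) p
        + (1 - (pdx ψ p) ^ 2) * pdy (pdy ψ) p = 0) :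
    ∀ p ∈ D,
      pdy (fun q => pdy ψ q / Real.sqrt (1 - (pdx ψ q) ^ 2 - (pdy ψ q) ^ 2)) p
        + pdx (fun q => pdx ψ q / Real.sqrt (1 - (pdx ψ q) ^ 2 - (pdy ψ q) ^ 2)) p
        = 0 := by
  intro p hp
  -- u, v : the partial derivative functions (via fderiv)
  set u : ℝ × ℝ → ℝ := fun q => fderiv ℝ ψ q (1, 0) with hu_def
  set v : ℝ × ℝ → ℝ := fun q => fderiv ℝ ψ q (0, 1) with hv_def
  have hψD : ∀ q ∈ D, DifferentiableAt ℝ ψ q := fun q hq =>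
    (hψ.contDiffAt (hD.mem_nhds hq)).differentiableAt two_ne_zero
  have hupd : ∀ q ∈ D, pdx ψ q = u q := fun q hq => pdx_eq ψ q (hψD q hq)
  have hvpd : ∀ q ∈ D, pdy ψ q = v q := fun q hq => pdy_eq ψ q (hψD q hq)
  -- fderiv ψ is C¹ on D
  have hf' : ContDiffOn ℝ 1 (fderiv ℝ ψ) D := by
    have := hψ.fderiv_of_isOpen hD (m := 1) (by norm_num)
    exact this
  have hdf : DifferentiableAt ℝ (fderiv ℝ ψ) p :=
    ((hf'.contDiffAt (hD.mem_nhds hp))).differentiableAt one_ne_zero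
  set f'' := fderiv ℝ (fderiv ℝ ψ) p with hf''_def
  -- u and v are differentiable at each point of D, with explicit derivatives at p
  have huD : ∀ q ∈ D, DifferentiableAt ℝ u q := fun q hq =>
    (((hf'.contDiffAt (hD.mem_nhds hq))).differentiableAt one_ne_zero).clm_apply
      (differentiableAt_const _)
  have hvD : ∀ q ∈ D, DifferentiableAt ℝ v q := fun q hq =>
    (((hf'.contDiffAt (hD.mem_nhds hq))).differentiableAt one_ne_zero).clm_apply
      (differentiableAt_const _)
  have huf : HasFDerivAt u ((ContinuousLinearMap.apply ℝ ℝ ((1 : ℝ), (0 : ℝ))).comp f'') p :=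
    (ContinuousLinearMap.apply ℝ ℝ ((1 : ℝ), (0 : ℝ))).hasFDerivAt.comp p hdf.hasFDerivAt
  have hvf : HasFDerivAt v ((ContinuousLinearMap.apply ℝ ℝ ((0 : ℝ), (1 : ℝ))).comp f'') p :=
    (ContinuousLinearMap.apply ℝ ℝ ((0 : ℝ), (1 : ℝ))).hasFDerivAt.comp p hdf.hasFDerivAt
  have hfderiv_u : fderiv ℝ u p = (ContinuousLinearMap.apply ℝ ℝ ((1 : ℝ), (0 : ℝ))).comp f'' :=
    huf.fderiv
  have hfderiv_v : fderiv ℝ v p = (ContinuousLinearMap.apply ℝ ℝ ((0 : ℝ), (1 : ℝ))).comp f'' :=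
    hvf.fderiv
  -- symmetry of second derivatives
  have hsymm : IsSymmSndFDerivAt ℝ ψ p :=
    (hψ.contDiffAt (hD.mem_nhds hp)).isSymmSndFDerivAt (by simp [minSmoothness_of_isRCLikeNormedField])
  -- abbreviations
  set a := u p with ha_def
  set b := v p with hb_def
  set A := f'' (1, 0) (1, 0) with hA_def
  set Bm := f'' (0, 1) (1, 0) with hBm_def
  set Cm := f'' (1, 0) (0, 1) with hCm_def
  set Dm := f'' (0, 1) (0, 1) with hDm_def
  have hBC : Bm = Cm := hsymm (0, 1) (1, 0)
  have hBpos : 0 < 1 - a ^ 2 - b ^ 2 := by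
    have := hB p hp
    rwa [hupd p hp, hvpd p hp] at this
  set ρ := Real.sqrt (1 - a ^ 2 - b ^ 2) with hρ_def
  have hρpos : 0 < ρ := Real.sqrt_pos.mpr hBpos
  have hρsq : ρ ^ 2 = 1 - a ^ 2 - b ^ 2 := Real.sq_sqrt hBpos.le
  -- second partials of ψ in terms of f''
  have hxev : ∀ᶠ t in nhds p.1, (t, p.2) ∈ D := by
    have hc : ContinuousAt (fun t : ℝ => (t, p.2)) p.1 :=
      (continuous_id.prodMk continuous_const).continuousAt
    exact hc.preimage_mem_nhds (hD.mem_nhds hp)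
  have hyev : ∀ᶠ t in nhds p.2, (p.1, t) ∈ D := by
    have hc : ContinuousAt (fun t : ℝ => (p.1, t)) p.2 :=
      (continuous_const.prodMk continuous_id).continuousAt
    exact hc.preimage_mem_nhds (hD.mem_nhds hp)
  -- derivatives of u, v along lines through p
  have hUx : HasDerivAt (fun t => u (t, p.2)) A p.1 := by
    have := hasDerivAt_horiz u p (huD p hp)
    rwa [hfderiv_u] at this
  have hUy : HasDerivAt (fun t => u (p.1, t)) Bm p.2 := by
    have := hasDerivAt_vert u p (huD p hp)
    rwa [hfderiv_u] at this
  have hVx : HasDerivAt (fun t => v (t, p.2)) Cm p.1 := by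
    have := hasDerivAt_horiz v p (hvD p hp)
    rwa [hfderiv_v] at this
  have hVy : HasDerivAt (fun t => v (p.1, t)) Dm p.2 := by
    have := hasDerivAt_vert v p (hvD p hp)
    rwa [hfderiv_v] at this
  -- identify the second partials in hzmc
  have hzmc' : (1 - b ^ 2) * A + 2 * a * b * Bm + (1 - a ^ 2) * Dm = 0 := by
    have h0 := hzmc p hp
    have e1 : pdx (pdx ψ) p = A := by
      have hev : (fun t => pdx ψ (t, p.2)) =ᶠ[nhds p.1] fun t => u (t, p.2) := by
        filter_upwards [hxev] with t ht using hupd _ ht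
      have : pdx (pdx ψ) p = deriv (fun t => u (t, p.2)) p.1 := hev.deriv_eq
      rw [this, hUx.deriv]
    have e2 : pdy (pdx ψ) p = Bm := by
      have hev : (fun t => pdx ψ (p.1, t)) =ᶠ[nhds p.2] fun t => u (p.1, t) := by
        filter_upwards [hyev] with t ht using hupd _ ht
      have : pdy (pdx ψ) p = deriv (fun t => u (p.1, t)) p.2 := hev.deriv_eq
      rw [this, hUy.deriv]
    have e3 : pdy (pdy ψ) p = Dm := by
      have hev : (fun t => pdy ψ (p.1, t)) =ᶠ[nhds p.2] fun t => v (p.1, t) := by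
        filter_upwards [hyev] with t ht using hvpd _ ht
      have : pdy (pdy ψ) p = deriv (fun t => v (p.1, t)) p.2 := hev.deriv_eq
      rw [this, hVy.deriv]
    rw [e1, e2, e3, hupd p hp, hvpd p hp] at h0
    exact h0
  -- compute the two terms of the goal
  have hval_y : ∀ t : ℝ, (p.1, t) ∈ D →
      pdy ψ (p.1, t) / Real.sqrt (1 - pdx ψ (p.1, t) ^ 2 - pdy ψ (p.1, t) ^ 2)
        = v (p.1, t) / Real.sqrt (1 - u (p.1, t) ^ 2 - v (p.1, t) ^ 2) := by
    intro t ht; rw [hupd _ ht, hvpd _ ht]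
  have hval_x : ∀ t : ℝ, (t, p.2) ∈ D →
      pdx ψ (t, p.2) / Real.sqrt (1 - pdx ψ (t, p.2) ^ 2 - pdy ψ (t, p.2) ^ 2)
        = u (t, p.2) / Real.sqrt (1 - u (t, p.2) ^ 2 - v (t, p.2) ^ 2) := by
    intro t ht; rw [hupd _ ht, hvpd _ ht]
  -- derivative of the base 1 - u² - v² along lines
  have hBy : HasDerivAt (fun t => 1 - u (p.1, t) ^ 2 - v (p.1, t) ^ 2)
      (-(2 * a * Bm) - 2 * b * Dm) p.2 := by
    have h1 : HasDerivAt (fun t => u (p.1, t) ^ 2) (2 * a * Bm) p.2 := by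
      have := hUy.fun_pow 2
      simpa [mul_comm, mul_assoc, mul_left_comm] using this
    have h2 : HasDerivAt (fun t => v (p.1, t) ^ 2) (2 * b * Dm) p.2 := by
      have := hVy.fun_pow 2
      simpa [mul_comm, mul_assoc, mul_left_comm] using this
    simpa using ((hasDerivAt_const p.2 (1 : ℝ)).fun_sub h1).fun_sub h2
  have hBx : HasDerivAt (fun t => 1 - u (t, p.2) ^ 2 - v (t, p.2) ^ 2)
      (-(2 * a * A) - 2 * b * Cm) p.1 := by
    have h1 : HasDerivAt (fun t => u (t, p.2) ^ 2) (2 * a * A) p.1 := by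
      have := hUx.fun_pow 2
      simpa [mul_comm, mul_assoc, mul_left_comm] using this
    have h2 : HasDerivAt (fun t => v (t, p.2) ^ 2) (2 * b * Cm) p.1 := by
      have := hVx.fun_pow 2
      simpa [mul_comm, mul_assoc, mul_left_comm] using this
    simpa using ((hasDerivAt_const p.1 (1 : ℝ)).fun_sub h1).fun_sub h2
  have hbase_y : (1 : ℝ) - u (p.1, p.2) ^ 2 - v (p.1, p.2) ^ 2 = 1 - a ^ 2 - b ^ 2 := by
    simp [ha_def, hb_def]
  have hSy : HasDerivAt (fun t => Real.sqrt (1 - u (p.1, t) ^ 2 - v (p.1, t) ^ 2))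
      ((-(2 * a * Bm) - 2 * b * Dm) / (2 * ρ)) p.2 := by
    have := hBy.sqrt (by rw [hbase_y]; exact hBpos.ne')
    rwa [hbase_y] at this
  have hSx : HasDerivAt (fun t => Real.sqrt (1 - u (t, p.2) ^ 2 - v (t, p.2) ^ 2))
      ((-(2 * a * A) - 2 * b * Cm) / (2 * ρ)) p.1 := by
    have := hBx.sqrt (by rw [hbase_y]; exact hBpos.ne')
    rwa [hbase_y] at this
  have hGy : HasDerivAt (fun t => v (p.1, t) / Real.sqrt (1 - u (p.1, t) ^ 2 - v (p.1, t) ^ 2))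
      ((Dm * ρ - b * ((-(2 * a * Bm) - 2 * b * Dm) / (2 * ρ))) / ρ ^ 2) p.2 := by
    have := hVy.div hSy (by rw [hbase_y]; exact hρpos.ne')
    rwa [hbase_y] at this
  have hGx : HasDerivAt (fun t => u (t, p.2) / Real.sqrt (1 - u (t, p.2) ^ 2 - v (t, p.2) ^ 2))
      ((A * ρ - a * ((-(2 * a * A) - 2 * b * Cm) / (2 * ρ))) / ρ ^ 2) p.1 := by
    have := hUx.div hSx (by rw [hbase_y]; exact hρpos.ne')
    rwa [hbase_y] at this
  -- the two goal terms
  have eY : pdy (fun q => pdy ψ q / Real.sqrt (1 - (pdx ψ q) ^ 2 - (pdy ψ q) ^ 2)) p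
      = (Dm * ρ - b * ((-(2 * a * Bm) - 2 * b * Dm) / (2 * ρ))) / ρ ^ 2 := by
    have hev : (fun t => pdy ψ (p.1, t) / Real.sqrt (1 - pdx ψ (p.1, t) ^ 2 - pdy ψ (p.1, t) ^ 2))
        =ᶠ[nhds p.2] fun t => v (p.1, t) / Real.sqrt (1 - u (p.1, t) ^ 2 - v (p.1, t) ^ 2) := by
      filter_upwards [hyev] with t ht using hval_y t ht
    have : pdy (fun q => pdy ψ q / Real.sqrt (1 - (pdx ψ q) ^ 2 - (pdy ψ q) ^ 2)) p
        = deriv (fun t => v (p.1, t) / Real.sqrt (1 - u (p.1, t) ^ 2 - v (p.1, t) ^ 2)) p.2 :=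
      hev.deriv_eq
    rw [this, hGy.deriv]
  have eX : pdx (fun q => pdx ψ q / Real.sqrt (1 - (pdx ψ q) ^ 2 - (pdy ψ q) ^ 2)) p
      = (A * ρ - a * ((-(2 * a * A) - 2 * b * Cm) / (2 * ρ))) / ρ ^ 2 := by
    have hev : (fun t => pdx ψ (t, p.2) / Real.sqrt (1 - pdx ψ (t, p.2) ^ 2 - pdy ψ (t, p.2) ^ 2))
        =ᶠ[nhds p.1] fun t => u (t, p.2) / Real.sqrt (1 - u (t, p.2) ^ 2 - v (t, p.2) ^ 2) := by
      filter_upwards [hxev] with t ht using hval_x t ht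
    have : pdx (fun q => pdx ψ q / Real.sqrt (1 - (pdx ψ q) ^ 2 - (pdy ψ q) ^ 2)) p
        = deriv (fun t => u (t, p.2) / Real.sqrt (1 - u (t, p.2) ^ 2 - v (t, p.2) ^ 2)) p.1 :=
      hev.deriv_eq
    rw [this, hGx.deriv]
  rw [eY, eX]
  rw [← hBC] at *
  have hρne : ρ ≠ 0 := hρpos.ne'
  field_simp
  linear_combination hzmc' + (Dm + A) * hρsq
end
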